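/- If an adjacency {a, b} occurs in all three input permutations π₁, π₂, π₃, then there exists a median permutation (minimizing the total breakpoint distance to π₁, π₂, π₃) that also contains the adjacency {a, b}. -/

import Mathlib

/-- `l` is a permutation of `{1,…,n}` viewed as a sequence. -/
def IsPermSeq (n : ℕ) (l : List ℕ) : Prop :=
  l.Nodup ∧ l.toFinset = Finset.Icc 1 n

/-- The set of unordered adjacencies `{l[i], l[i+1]}` of a sequence `l`. -/
def adjSet (l : List ℕ) : Finset (Sym2 ℕ) :=
  ((l.zip l.tail).map fun p => Sym2.mk p.1 p.2).toFinset

/-- Breakpoint distance: `|Adj(p) \ Adj(q)|`. -/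
def dBP (p q : List ℕ) : ℕ := (adjSet p \ adjSet q).card

def glue2 (u v : List ℕ) : Finset (Sym2 ℕ) :=
  match u.getLast?, v.head? with
  | some x, some y => {s(x, y)}
  | _, _ => ∅

lemma adjSet_nil : adjSet [] = ∅ := rfl
lemma adjSet_single (x : ℕ) : adjSet [x] = ∅ := rfl

lemma adjSet_cons_cons (x y : ℕ) (l : List ℕ) :
    adjSet (x :: y :: l) = insert s(x, y) (adjSet (y :: l)) := by
  simp [adjSet, List.toFinset_cons]

lemma glue2_nil_left (v : List ℕ) : glue2 [] v = ∅ := rfl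
lemma glue2_nil_right (u : List ℕ) : glue2 u [] = ∅ := by
  cases h : u.getLast? <;> simp [glue2, h]

lemma glue2_cons_right (u : List ℕ) (x : ℕ) (v : List ℕ) :
    glue2 u (x :: v) = glue2 u [x] := rfl

lemma adjSet_append (u v : List ℕ) :
    adjSet (u ++ v) = adjSet u ∪ glue2 u v ∪ adjSet v := by
  induction u with
  | nil => simp [adjSet_nil, glue2_nil_left]
  | cons x u ih =>
    cases u with
    | nil =>
      cases v with
      | nil => simp [adjSet_nil, glue2_nil_right, adjSet_single]
      | cons y v' =>
        simp [adjSet_cons_cons, adjSet_single, glue2, Finset.insert_eq, -Finset.singleton_union]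
    | cons x' u' =>
      simp only [List.cons_append] at ih ⊢
      rw [adjSet_cons_cons, ih, adjSet_cons_cons]
      have hg : glue2 (x :: x' :: u') v = glue2 (x' :: u') v := by
        unfold glue2; rw [List.getLast?_cons_cons]
      rw [hg]
      ext e; simp [Finset.mem_union, Finset.mem_insert]

lemma mem_adjSet_iff {l : List ℕ} {e : Sym2 ℕ} :
    e ∈ adjSet l ↔ ∃ p ∈ l.zip l.tail, Sym2.mk p.1 p.2 = e := by
  simp [adjSet]

lemma mem_of_mem_adjSet {l : List ℕ} {e : Sym2 ℕ} (he : e ∈ adjSet l)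
    {x : ℕ} (hx : x ∈ e) : x ∈ l := by
  rw [mem_adjSet_iff] at he
  obtain ⟨⟨u, v⟩, hp, rfl⟩ := he
  have h1 := List.of_mem_zip hp
  rcases Sym2.mem_iff.1 hx with rfl | rfl
  · exact h1.1
  · exact List.mem_of_mem_tail h1.2

lemma zip_tail_ne {l : List ℕ} (h : l.Nodup) {p : ℕ × ℕ}
    (hp : p ∈ l.zip l.tail) : p.1 ≠ p.2 := by
  induction l with
  | nil => simp at hp
  | cons u t ih =>
    cases t with
    | nil => simp at hp
    | cons v t' =>
      simp only [List.tail_cons, List.zip_cons_cons] at hp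
      rcases List.mem_cons.1 hp with rfl | hp'
    -- p = (u,v)
      · intro he
        simp only at he
        exact (List.nodup_cons.1 h).1 (he ▸ List.mem_cons_self)
      · exact ih (List.nodup_cons.1 h).2 hp'

lemma adj_ne {l : List ℕ} (h : l.Nodup) {x y : ℕ} (hxy : s(x, y) ∈ adjSet l) :
    x ≠ y := by
  rw [mem_adjSet_iff] at hxy
  obtain ⟨⟨u, v⟩, hp, he⟩ := hxy
  have := zip_tail_ne h hp
  rw [Sym2.eq_iff] at he
  rcases he with ⟨rfl, rfl⟩ | ⟨rfl, rfl⟩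
  · exact this
  · exact this.symm

lemma mem_glue2 {u v : List ℕ} {e : Sym2 ℕ} :
    e ∈ glue2 u v ↔ ∃ x y, u.getLast? = some x ∧ v.head? = some y ∧ e = s(x, y) := by
  cases h1 : u.getLast? <;> cases h2 : v.head? <;> simp [glue2, h1, h2]

lemma glue2_card_le (u v : List ℕ) : (glue2 u v).card ≤ 1 := by
  cases h1 : u.getLast? <;> cases h2 : v.head? <;> simp [glue2, h1, h2]

lemma adjSet_reverse (l : List ℕ) : adjSet l.reverse = adjSet l := by
  induction l with
  | nil => rfl
  | cons x l ih =>
    rw [List.reverse_cons, adjSet_append, ih, adjSet_single,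
      show x :: l = [x] ++ l from rfl, adjSet_append, adjSet_single]
    have : glue2 l.reverse [x] = glue2 [x] l := by
      cases h : l.head? <;>
        simp [glue2, List.getLast?_reverse, h, Sym2.eq_swap]
    rw [this]
    ext e; simp [Finset.mem_union]; tauto

lemma adjL_nodup {l : List ℕ} (h : l.Nodup) :
    ((l.zip l.tail).map fun p => Sym2.mk p.1 p.2).Nodup := by
  induction l with
  | nil => simp
  | cons u t ih =>
    cases t with
    | nil => simp
    | cons v t' =>
      simp only [List.tail_cons, List.zip_cons_cons, List.map_cons]
      rw [List.nodup_cons]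
      constructor
      · intro hmem
        have : s(u, v) ∈ adjSet (v :: t') := by
          simpa [adjSet, List.mem_toFinset] using hmem
        exact (List.nodup_cons.1 h).1 (mem_of_mem_adjSet this (by simp))
      · exact ih (List.nodup_cons.1 h).2

lemma card_adjSet {l : List ℕ} (h : l.Nodup) : (adjSet l).card = l.length - 1 := by
  rw [adjSet, List.toFinset_card_of_nodup (adjL_nodup h)]
  simp [List.length_zip]

lemma card_adjSet_le (l : List ℕ) : (adjSet l).card ≤ l.length - 1 := by
  calc (adjSet l).card ≤ ((l.zip l.tail).map fun p => Sym2.mk p.1 p.2).length :=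
        List.toFinset_card_le _
    _ = min l.length l.tail.length := by simp [List.length_zip]
    _ ≤ l.length - 1 := by simp

lemma card_filter_head {a : ℕ} {l : List ℕ} (ha : a ∉ l) :
    ((adjSet (a :: l)).filter (fun e => a ∈ e)).card ≤ 1 := by
  have hsub : (adjSet (a :: l)).filter (fun e => a ∈ e) ⊆ glue2 [a] l := by
    intro e he
    rw [Finset.mem_filter] at he
    obtain ⟨he1, he2⟩ := he
    rw [show a :: l = [a] ++ l from rfl, adjSet_append, adjSet_single] at he1
    simp only [Finset.mem_union] at he1
    rcases he1 with (he1 | he1) | he1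
    · simp [adjSet_nil] at he1
    · exact he1
    · exact absurd (mem_of_mem_adjSet he1 he2) ha
  exact le_trans (Finset.card_le_card hsub) (glue2_card_le _ _)

lemma card_filter_mem {a : ℕ} {l : List ℕ} (h : l.Nodup) :
    ((adjSet l).filter (fun e => a ∈ e)).card ≤ 2 := by
  induction l with
  | nil => simp [adjSet_nil]
  | cons x l ih =>
    rcases eq_or_ne a x with rfl | hax
    · exact le_trans (card_filter_head (List.nodup_cons.1 h).1) (by norm_num)
    · rw [show x :: l = [x] ++ l from rfl, adjSet_append, adjSet_single]
      have : ((∅ ∪ glue2 [x] l ∪ adjSet l).filter (fun e => a ∈ e)).card ≤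
          ((glue2 [x] l).filter (fun e => a ∈ e)).card +
          ((adjSet l).filter (fun e => a ∈ e)).card := by
        rw [Finset.empty_union, Finset.filter_union]
        exact Finset.card_union_le _ _
      refine le_trans this ?_
      cases l with
      | nil =>
        have hg : glue2 [x] ([] : List ℕ) = ∅ := rfl
        simp [hg, adjSet_nil]
      | cons y l' =>
        rcases eq_or_ne a y with rfl | hay
        · have h1 := card_filter_head (a := a) (l := l') (by
            have := (List.nodup_cons.1 h).2
            exact (List.nodup_cons.1 this).1)
          have h2 : ((glue2 [x] (a :: l')).filter (fun e => a ∈ e)).card ≤ 1 :=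
            le_trans (Finset.card_filter_le _ _) (glue2_card_le _ _)
          omega
        · have h2 : ((glue2 [x] (y :: l')).filter (fun e => a ∈ e)).card = 0 := by
            rw [Finset.card_eq_zero, Finset.filter_eq_empty_iff]
            intro e he
            rw [mem_glue2] at he
            obtain ⟨x', y', hx', hy', rfl⟩ := he
            simp at hx' hy'
            subst hx'; subst hy'
            simp [Sym2.mem_iff]
            exact ⟨hax, hay⟩
          have h3 := ih (List.nodup_cons.1 h).2
          omega

lemma adjSet_cons (x : ℕ) (v : List ℕ) :
    adjSet (x :: v) = glue2 [x] v ∪ adjSet v := by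
  rw [show x :: v = [x] ++ v from rfl, adjSet_append, adjSet_single]
  simp

lemma glue2_pair (x y : ℕ) : glue2 [x] [y] = {s(x, y)} := by simp [glue2]

lemma exchange_core (p A M B : List ℕ) (a b : ℕ) (hp : p.Nodup) (hM : M ≠ [])
    (hnd : (A ++ a :: (M ++ b :: B)).Nodup)
    (hPab : s(a, b) ∈ adjSet p)
    (hTab : s(a, b) ∉ adjSet (A ++ a :: (M ++ b :: B))) :
    2 * (adjSet (A ++ a :: (M ++ b :: B)) ∩ adjSet p).card ≤
      (adjSet (A ++ (M.reverse ++ a :: b :: B)) ∩ adjSet p).card +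
      (adjSet (A ++ a :: b :: (M.reverse ++ B)) ∩ adjSet p).card := by
  classical
  obtain ⟨m, hm⟩ : ∃ m, M.head? = some m := ⟨M.head hM, List.head?_eq_head hM⟩
  obtain ⟨k, hk⟩ : ∃ k, M.getLast? = some k :=
    ⟨M.getLast hM, List.getLast?_eq_getLast hM⟩
  have hkM : k ∈ M := List.mem_of_mem_getLast? hk
  have hmM : m ∈ M := List.mem_of_mem_head? hm
  -- nodup facts
  have hnd' := hnd
  simp only [List.nodup_append, List.nodup_cons, List.mem_append, List.mem_cons,
    List.disjoint_left] at hnd'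
  obtain ⟨hndA, ⟨haX, hndM, ⟨hbB, hndB⟩, hMX⟩, hAX⟩ := hnd'
  have haM : a ∉ M := fun h => haX (Or.inl h)
  have hab : a ≠ b := fun h => haX (Or.inr (Or.inl h))
  have haB : a ∉ B := fun h => haX (Or.inr (Or.inr h))
  have hbM : b ∉ M := fun h => hMX _ h _ (Or.inl rfl) rfl
  have hMB : ∀ x ∈ M, x ∉ B := fun x hx h => hMX x hx x (Or.inr h) rfl
  -- glue computations
  have g1 : glue2 [a] (M ++ b :: B) = {s(a, m)} := by
    have h1 : (M ++ b :: B).head? = some m := by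
      rw [List.head?_append_of_ne_nil _ hM]; exact hm
    simp [glue2, h1]
  have gA : glue2 A (a :: (M ++ b :: B)) = glue2 A [a] := glue2_cons_right _ _ _
  have g2 : glue2 M (b :: B) = {s(k, b)} := by simp [glue2, hk]
  have g3 : glue2 M.reverse (a :: b :: B) = {s(m, a)} := by
    simp [glue2, List.getLast?_reverse, hm]
  have g4 : glue2 [b] (M.reverse ++ B) = {s(b, k)} := by
    have h1 : (M.reverse ++ B).head? = some k := by
      rw [List.head?_append_of_ne_nil _ (by simpa using hM), List.head?_reverse]
      exact hk
    simp [glue2, h1]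
  have gA2 : glue2 A (a :: b :: (M.reverse ++ B)) = glue2 A [a] := glue2_cons_right _ _ _
  -- membership characterizations
  have hTmem : ∀ e, e ∈ adjSet (A ++ a :: (M ++ b :: B)) ↔
      (e ∈ adjSet A ∨ e ∈ glue2 A [a] ∨ e = s(a, m) ∨ e ∈ adjSet M ∨ e = s(k, b) ∨
        e ∈ glue2 [b] B ∨ e ∈ adjSet B) := by
    intro e
    rw [adjSet_append, gA, adjSet_cons, g1, adjSet_append, g2, adjSet_cons]
    simp only [Finset.mem_union, Finset.mem_singleton, or_assoc]
  have hT1mem : ∀ e, e ∈ adjSet (A ++ (M.reverse ++ a :: b :: B)) ↔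
      (e ∈ adjSet A ∨ e ∈ glue2 A (M.reverse ++ a :: b :: B) ∨ e ∈ adjSet M ∨
        e = s(m, a) ∨ e = s(a, b) ∨ e ∈ glue2 [b] B ∨ e ∈ adjSet B) := by
    intro e
    rw [adjSet_append, adjSet_append, adjSet_reverse, g3, adjSet_cons_cons, adjSet_cons]
    simp only [Finset.mem_union, Finset.mem_singleton, Finset.mem_insert, or_assoc]
  have hT2mem : ∀ e, e ∈ adjSet (A ++ a :: b :: (M.reverse ++ B)) ↔
      (e ∈ adjSet A ∨ e ∈ glue2 A [a] ∨ e = s(a, b) ∨ e = s(b, k) ∨ e ∈ adjSet M ∨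
        e ∈ glue2 M.reverse B ∨ e ∈ adjSet B) := by
    intro e
    rw [adjSet_append, gA2, adjSet_cons_cons, adjSet_cons, g4, adjSet_append, adjSet_reverse]
    simp only [Finset.mem_union, Finset.mem_singleton, Finset.mem_insert, or_assoc]
  set T := adjSet (A ++ a :: (M ++ b :: B)) with hT
  set T₁ := adjSet (A ++ (M.reverse ++ a :: b :: B)) with hT1
  set T₂ := adjSet (A ++ a :: b :: (M.reverse ++ B)) with hT2
  set P := adjSet p with hP
  have hT1ab : s(a, b) ∈ T₁ :=
    (hT1mem _).2 (Or.inr (Or.inr (Or.inr (Or.inr (Or.inl rfl)))))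
  have hT2ab : s(a, b) ∈ T₂ := (hT2mem _).2 (Or.inr (Or.inr (Or.inl rfl)))
  -- lost-edge characterizations
  have hD₁ : ∀ e ∈ T \ T₁, (∃ x ∈ A, e = s(x, a)) ∨ e = s(k, b) := by
    intro e he
    rw [Finset.mem_sdiff] at he
    obtain ⟨heT, heT1⟩ := he
    rcases (hTmem e).1 heT with h | h | h | h | h | h | h
    · exact absurd ((hT1mem e).2 (Or.inl h)) heT1
    · left
      obtain ⟨x, y, hx, hy, rfl⟩ := mem_glue2.1 h
      simp only [List.head?_cons, Option.some.injEq] at hy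
      subst hy
      exact ⟨x, List.mem_of_mem_getLast? hx, rfl⟩
    · exact absurd ((hT1mem e).2 (Or.inr (Or.inr (Or.inr (Or.inl
        (by rw [h]; exact Sym2.eq_swap)))))) heT1
    · exact absurd ((hT1mem e).2 (Or.inr (Or.inr (Or.inl h)))) heT1
    · right; exact h
    · exact absurd ((hT1mem e).2 (Or.inr (Or.inr (Or.inr (Or.inr (Or.inr (Or.inl h))))))) heT1
    · exact absurd ((hT1mem e).2 (Or.inr (Or.inr (Or.inr (Or.inr (Or.inr (Or.inr h))))))) heT1
  have hD₂ : ∀ e ∈ T \ T₂, e = s(a, m) ∨ (∃ y ∈ B, e = s(b, y)) := by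
    intro e he
    rw [Finset.mem_sdiff] at he
    obtain ⟨heT, heT2⟩ := he
    rcases (hTmem e).1 heT with h | h | h | h | h | h | h
    · exact absurd ((hT2mem e).2 (Or.inl h)) heT2
    · exact absurd ((hT2mem e).2 (Or.inr (Or.inl h))) heT2
    · left; exact h
    · exact absurd ((hT2mem e).2 (Or.inr (Or.inr (Or.inr (Or.inr (Or.inl h)))))) heT2
    · exact absurd ((hT2mem e).2 (Or.inr (Or.inr (Or.inr (Or.inl
        (by rw [h]; exact Sym2.eq_swap)))))) heT2
    · right
      obtain ⟨x, y, hx, hy, rfl⟩ := mem_glue2.1 h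
      simp only [List.getLast?_singleton, Option.some.injEq] at hx
      subst hx
      exact ⟨y, List.mem_of_mem_head? hy, rfl⟩
    · exact absurd ((hT2mem e).2 (Or.inr (Or.inr (Or.inr (Or.inr (Or.inr (Or.inr h))))))) heT2
  -- disjointness of losses
  have hdisj : Disjoint ((T \ T₁) ∩ P) ((T \ T₂) ∩ P) := by
    rw [Finset.disjoint_left]
    intro e he1 he2
    have h1 := hD₁ e (Finset.mem_inter.1 he1).1
    have h2 := hD₂ e (Finset.mem_inter.1 he2).1
    rcases h1 with ⟨x, hxA, rfl⟩ | rfl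
    · rcases h2 with h2 | ⟨y, hyB, h2⟩ <;> rw [Sym2.eq_iff] at h2
      · rcases h2 with ⟨rfl, rfl⟩ | ⟨rfl, _⟩
        · exact hAX _ hxA _ (Or.inl rfl) rfl
        · exact hAX _ hxA _ (Or.inr (Or.inl hmM)) rfl
      · rcases h2 with ⟨rfl, rfl⟩ | ⟨rfl, h2⟩
        · exact hAX _ hxA _ (Or.inr (Or.inr (Or.inl rfl))) rfl
        · exact hab h2
    · rcases h2 with h2 | ⟨y, hyB, h2⟩ <;> rw [Sym2.eq_iff] at h2
      · rcases h2 with ⟨rfl, rfl⟩ | ⟨rfl, rfl⟩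
        · exact haM hkM
        · exact hab rfl
      · rcases h2 with ⟨rfl, rfl⟩ | ⟨rfl, _⟩
        · exact hbM hkM
        · exact hMB k hkM hyB
  -- bounds on shared edges at a and at b
  have hEa : ((T ∩ P).filter (fun e => a ∈ e)).card ≤ 1 := by
    have hsub : (T ∩ P).filter (fun e => a ∈ e) ⊆ (P.filter (fun e => a ∈ e)) \ {s(a, b)} := by
      intro e he
      rw [Finset.mem_filter, Finset.mem_inter] at he
      rw [Finset.mem_sdiff, Finset.mem_filter, Finset.mem_singleton]
      exact ⟨⟨he.1.2, he.2⟩, fun h => hTab (h ▸ he.1.1)⟩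
    have h1 : ({s(a, b)} : Finset (Sym2 ℕ)) ⊆ P.filter (fun e => a ∈ e) := by
      simp [Finset.singleton_subset_iff, hPab]
    have h2 := Finset.card_sdiff_of_subset h1
    have h3 : (P.filter (fun e => a ∈ e)).card ≤ 2 := card_filter_mem hp
    have h4 := Finset.card_le_card hsub
    simp at h2
    omega
  have hEb : ((T ∩ P).filter (fun e => b ∈ e)).card ≤ 1 := by
    have hsub : (T ∩ P).filter (fun e => b ∈ e) ⊆ (P.filter (fun e => b ∈ e)) \ {s(a, b)} := by
      intro e he
      rw [Finset.mem_filter, Finset.mem_inter] at he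
      rw [Finset.mem_sdiff, Finset.mem_filter, Finset.mem_singleton]
      exact ⟨⟨he.1.2, he.2⟩, fun h => hTab (h ▸ he.1.1)⟩
    have h1 : ({s(a, b)} : Finset (Sym2 ℕ)) ⊆ P.filter (fun e => b ∈ e) := by
      simp [Finset.singleton_subset_iff, hPab]
    have h2 := Finset.card_sdiff_of_subset h1
    have h3 : (P.filter (fun e => b ∈ e)).card ≤ 2 := card_filter_mem hp
    have h4 := Finset.card_le_card hsub
    simp at h2
    omega
  -- total loss bound
  have hsum : ((T \ T₁) ∩ P).card + ((T \ T₂) ∩ P).card ≤ 2 := by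
    rw [← Finset.card_union_of_disjoint hdisj]
    have hsub : ((T \ T₁) ∩ P) ∪ ((T \ T₂) ∩ P) ⊆
        ((T ∩ P).filter (fun e => a ∈ e)) ∪ ((T ∩ P).filter (fun e => b ∈ e)) := by
      intro e he
      rcases Finset.mem_union.1 he with he | he <;>
        rw [Finset.mem_inter, Finset.mem_sdiff] at he
      · rcases hD₁ e (Finset.mem_sdiff.2 he.1) with ⟨x, _, rfl⟩ | rfl
        · exact Finset.mem_union_left _ (Finset.mem_filter.2
            ⟨Finset.mem_inter.2 ⟨he.1.1, he.2⟩, by simp⟩)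
        · exact Finset.mem_union_right _ (Finset.mem_filter.2
            ⟨Finset.mem_inter.2 ⟨he.1.1, he.2⟩, by simp⟩)
      · rcases hD₂ e (Finset.mem_sdiff.2 he.1) with rfl | ⟨y, _, rfl⟩
        · exact Finset.mem_union_left _ (Finset.mem_filter.2
            ⟨Finset.mem_inter.2 ⟨he.1.1, he.2⟩, by simp⟩)
        · exact Finset.mem_union_right _ (Finset.mem_filter.2
            ⟨Finset.mem_inter.2 ⟨he.1.1, he.2⟩, by simp⟩)
    calc (((T \ T₁) ∩ P) ∪ ((T \ T₂) ∩ P)).card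
        ≤ (((T ∩ P).filter (fun e => a ∈ e)) ∪ ((T ∩ P).filter (fun e => b ∈ e))).card :=
          Finset.card_le_card hsub
      _ ≤ ((T ∩ P).filter (fun e => a ∈ e)).card + ((T ∩ P).filter (fun e => b ∈ e)).card :=
          Finset.card_union_le _ _
      _ ≤ 2 := by omega
  -- counting key
  have key : ∀ (T' : Finset (Sym2 ℕ)), s(a, b) ∈ T' →
      (T ∩ P).card + 1 ≤ (T' ∩ P).card + ((T \ T') ∩ P).card := by
    intro T' hmem
    have h1 : insert s(a, b) ((T ∩ P) \ (T \ T')) ⊆ T' ∩ P := by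
      intro e he
      rcases Finset.mem_insert.1 he with rfl | he
      · exact Finset.mem_inter.2 ⟨hmem, hPab⟩
      · rw [Finset.mem_sdiff, Finset.mem_inter, Finset.mem_sdiff] at he
        exact Finset.mem_inter.2 ⟨by tauto, he.1.2⟩
    have h2 : s(a, b) ∉ (T ∩ P) \ (T \ T') :=
      fun h => hTab (Finset.mem_inter.1 (Finset.mem_sdiff.1 h).1).1
    have h3 := Finset.card_le_card h1
    rw [Finset.card_insert_of_notMem h2] at h3
    have heq : (T ∩ P) \ ((T \ T') ∩ P) = (T ∩ P) \ (T \ T') := by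
      ext e
      simp only [Finset.mem_sdiff, Finset.mem_inter]
      tauto
    have h4 : (T ∩ P).card ≤ ((T ∩ P) \ (T \ T')).card + ((T \ T') ∩ P).card := by
      have h5 := Finset.card_le_card_sdiff_add_card (s := T ∩ P) (t := (T \ T') ∩ P)
      rw [heq] at h5
      exact h5
    omega
  have k1 := key T₁ hT1ab
  have k2 := key T₂ hT2ab
  omega

lemma mem_adjSet_append_right {e : Sym2 ℕ} (u : List ℕ) {v : List ℕ}
    (h : e ∈ adjSet v) : e ∈ adjSet (u ++ v) := by
  rw [adjSet_append]; exact Finset.mem_union_right _ h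

lemma dBP_eq (l p : List ℕ) :
    dBP l p + (adjSet l ∩ adjSet p).card = (adjSet l).card :=
  Finset.card_sdiff_add_card_inter _ _

lemma exchange_half (p₁ p₂ p₃ : List ℕ) (hp₁ : p₁.Nodup) (hp₂ : p₂.Nodup) (hp₃ : p₃.Nodup)
    (a b : ℕ) (h1 : s(a, b) ∈ adjSet p₁) (h2 : s(a, b) ∈ adjSet p₂) (h3 : s(a, b) ∈ adjSet p₃)
    (A M B : List ℕ) (hM : M ≠ []) (hnd : (A ++ a :: (M ++ b :: B)).Nodup)
    (hnab : s(a, b) ∉ adjSet (A ++ a :: (M ++ b :: B))) :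
    ∃ τ' : List ℕ, τ'.Perm (A ++ a :: (M ++ b :: B)) ∧ s(a, b) ∈ adjSet τ' ∧
      dBP τ' p₁ + dBP τ' p₂ + dBP τ' p₃ ≤
        dBP (A ++ a :: (M ++ b :: B)) p₁ + dBP (A ++ a :: (M ++ b :: B)) p₂ +
          dBP (A ++ a :: (M ++ b :: B)) p₃ := by
  classical
  set τ := A ++ a :: (M ++ b :: B) with hτ
  set τ₁ := A ++ (M.reverse ++ a :: b :: B) with hτ₁
  set τ₂ := A ++ a :: b :: (M.reverse ++ B) with hτ₂
  have perm1 : τ₁.Perm τ :=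
    List.Perm.append_left A (((List.reverse_perm M).append_right _).trans List.perm_middle)
  have perm2 : τ₂.Perm τ :=
    List.Perm.append_left A
      (((((List.reverse_perm M).append_right B).cons b).trans List.perm_middle.symm).cons a)
  have hnd1 : τ₁.Nodup := perm1.symm.nodup hnd
  have hnd2 : τ₂.Nodup := perm2.symm.nodup hnd
  have hc : (adjSet τ).card = τ.length - 1 := card_adjSet hnd
  have hc1 : (adjSet τ₁).card = (adjSet τ).card := by
    rw [card_adjSet hnd1, hc, perm1.length_eq]
  have hc2 : (adjSet τ₂).card = (adjSet τ).card := by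
    rw [card_adjSet hnd2, hc, perm2.length_eq]
  have hab1 : s(a, b) ∈ adjSet τ₁ := by
    apply mem_adjSet_append_right
    apply mem_adjSet_append_right
    rw [adjSet_cons_cons]
    exact Finset.mem_insert_self _ _
  have hab2 : s(a, b) ∈ adjSet τ₂ := by
    apply mem_adjSet_append_right (v := a :: b :: (M.reverse ++ B))
    rw [adjSet_cons_cons]
    exact Finset.mem_insert_self _ _
  have core1 := exchange_core p₁ A M B a b hp₁ hM hnd h1 hnab
  have core2 := exchange_core p₂ A M B a b hp₂ hM hnd h2 hnab
  have core3 := exchange_core p₃ A M B a b hp₃ hM hnd h3 hnab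
  simp only [← hτ, ← hτ₁, ← hτ₂] at core1 core2 core3
  have e1 := dBP_eq τ p₁; have e2 := dBP_eq τ p₂; have e3 := dBP_eq τ p₃
  have f1 := dBP_eq τ₁ p₁; have f2 := dBP_eq τ₁ p₂; have f3 := dBP_eq τ₁ p₃
  have g1 := dBP_eq τ₂ p₁; have g2 := dBP_eq τ₂ p₂; have g3 := dBP_eq τ₂ p₃
  have hmain : dBP τ₁ p₁ + dBP τ₁ p₂ + dBP τ₁ p₃ + (dBP τ₂ p₁ + dBP τ₂ p₂ + dBP τ₂ p₃) ≤
      2 * (dBP τ p₁ + dBP τ p₂ + dBP τ p₃) := by omega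
  rcases le_total (dBP τ₁ p₁ + dBP τ₁ p₂ + dBP τ₁ p₃) (dBP τ₂ p₁ + dBP τ₂ p₂ + dBP τ₂ p₃) with
    hle | hle
  · exact ⟨τ₁, perm1, hab1, by omega⟩
  · exact ⟨τ₂, perm2, hab2, by omega⟩

lemma exchange (p₁ p₂ p₃ τ : List ℕ) (hp₁ : p₁.Nodup) (hp₂ : p₂.Nodup) (hp₃ : p₃.Nodup)
    (hτ : τ.Nodup) (a b : ℕ)
    (h1 : s(a, b) ∈ adjSet p₁) (h2 : s(a, b) ∈ adjSet p₂) (h3 : s(a, b) ∈ adjSet p₃)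
    (haτ : a ∈ τ) (hbτ : b ∈ τ) (hnab : s(a, b) ∉ adjSet τ) :
    ∃ τ' : List ℕ, τ'.Perm τ ∧ s(a, b) ∈ adjSet τ' ∧
      dBP τ' p₁ + dBP τ' p₂ + dBP τ' p₃ ≤ dBP τ p₁ + dBP τ p₂ + dBP τ p₃ := by
  have hab : a ≠ b := adj_ne hp₁ h1
  obtain ⟨A, R, rfl⟩ := List.append_of_mem haτ
  rcases List.mem_append.1 hbτ with hbA | hbR
  · -- b occurs before a : swap roles
    obtain ⟨A', R', rfl⟩ := List.append_of_mem hbA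
    have hshape : (A' ++ b :: R') ++ a :: R = A' ++ b :: (R' ++ a :: R) := by simp
    rw [hshape] at hτ hnab ⊢
    by_cases hM : R' = []
    · exfalso
      apply hnab
      rw [hM]
      apply mem_adjSet_append_right A'
      rw [List.nil_append, adjSet_cons_cons, Sym2.eq_swap]
      exact Finset.mem_insert_self _ _
    · rw [Sym2.eq_swap] at h1 h2 h3 hnab
      obtain ⟨τ', hperm, habτ', hle⟩ :=
        exchange_half p₁ p₂ p₃ hp₁ hp₂ hp₃ b a h1 h2 h3 A' R' R hM hτ hnab
      exact ⟨τ', hperm, by rwa [Sym2.eq_swap] at habτ', hle⟩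
  · have hbR' : b ∈ R := by
      rcases List.mem_cons.1 hbR with h | h
      · exact absurd h.symm hab
      · exact h
    obtain ⟨M, B, rfl⟩ := List.append_of_mem hbR'
    by_cases hM : M = []
    · exfalso
      apply hnab
      rw [hM]
      apply mem_adjSet_append_right A
      rw [List.nil_append, adjSet_cons_cons]
      exact Finset.mem_insert_self _ _
    · exact exchange_half p₁ p₂ p₃ hp₁ hp₂ hp₃ a b h1 h2 h3 A M B hM hτ hnab

/-- If an adjacency `{a, b}` occurs in all three input permutations `π₁, π₂, π₃`, then
there exists a breakpoint median (a permutation minimizing the total breakpoint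
distance to `π₁, π₂, π₃`) that also contains the adjacency `{a, b}`. -/
theorem median_contains_common_adjacency (n : ℕ) (p₁ p₂ p₃ : List ℕ)
    (h₁ : IsPermSeq n p₁) (h₂ : IsPermSeq n p₂) (h₃ : IsPermSeq n p₃) (a b : ℕ)
    (ha₁ : Sym2.mk a b ∈ adjSet p₁) (ha₂ : Sym2.mk a b ∈ adjSet p₂)
    (ha₃ : Sym2.mk a b ∈ adjSet p₃) :
    ∃ σ : List ℕ, IsPermSeq n σ ∧
      (∀ τ : List ℕ, IsPermSeq n τ →
        dBP σ p₁ + dBP σ p₂ + dBP σ p₃ ≤ dBP τ p₁ + dBP τ p₂ + dBP τ p₃) ∧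
      Sym2.mk a b ∈ adjSet σ := by
  classical
  obtain ⟨hnd₁, hfin₁⟩ := h₁
  have haIcc : a ∈ Finset.Icc 1 n := by
    rw [← hfin₁, List.mem_toFinset]
    exact mem_of_mem_adjSet ha₁ (by simp)
  have hbIcc : b ∈ Finset.Icc 1 n := by
    rw [← hfin₁, List.mem_toFinset]
    exact mem_of_mem_adjSet ha₁ (by simp)
  set L := (Finset.Icc 1 n).sort (· ≤ ·) with hLdef
  have hLperm : IsPermSeq n L := ⟨Finset.sort_nodup _ _, Finset.sort_toFinset _ _⟩
  have hiff : ∀ l, IsPermSeq n l ↔ l.Perm L := by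
    intro l
    constructor
    · rintro ⟨hnd, hfin⟩
      have heq : l.toFinset = L.toFinset := by rw [hfin, hLperm.2]
      have h' := List.toFinset_eq_iff_perm_dedup.1 heq
      rwa [List.dedup_eq_self.2 hnd, List.dedup_eq_self.2 hLperm.1] at h'
    · intro h
      refine ⟨h.symm.nodup hLperm.1, ?_⟩
      have heq : l.toFinset = L.toFinset := by
        apply List.toFinset_eq_iff_perm_dedup.2
        rwa [List.dedup_eq_self.2 (h.symm.nodup hLperm.1), List.dedup_eq_self.2 hLperm.1]
      rw [heq, hLperm.2]
  set S := L.permutations.toFinset.filter (fun l => Sym2.mk a b ∈ adjSet l) with hSdef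
  have hmemS : ∀ l, l ∈ S ↔ (IsPermSeq n l ∧ Sym2.mk a b ∈ adjSet l) := by
    intro l
    rw [hSdef, Finset.mem_filter, List.mem_toFinset, List.mem_permutations, ← hiff]
  have hne : S.Nonempty := ⟨p₁, (hmemS p₁).2 ⟨⟨hnd₁, hfin₁⟩, ha₁⟩⟩
  obtain ⟨σ, hσS, hσmin⟩ :=
    Finset.exists_min_image S (fun l => dBP l p₁ + dBP l p₂ + dBP l p₃) hne
  obtain ⟨hσperm, hσab⟩ := (hmemS σ).1 hσS
  refine ⟨σ, hσperm, ?_, hσab⟩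
  intro τ hτp
  by_cases hcase : Sym2.mk a b ∈ adjSet τ
  · exact hσmin τ ((hmemS τ).2 ⟨hτp, hcase⟩)
  · have haτ : a ∈ τ := by rw [← List.mem_toFinset, hτp.2]; exact haIcc
    have hbτ : b ∈ τ := by rw [← List.mem_toFinset, hτp.2]; exact hbIcc
    obtain ⟨τ', hperm', hab', hle'⟩ :=
      exchange p₁ p₂ p₃ τ hnd₁ h₂.1 h₃.1 hτp.1 a b ha₁ ha₂ ha₃ haτ hbτ hcase
    have hτ'p : IsPermSeq n τ' := (hiff τ').2 (hperm'.trans ((hiff τ).1 hτp))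
    exact le_trans (hσmin τ' ((hmemS τ').2 ⟨hτ'p, hab'⟩)) hle'
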